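/- Let s ∈ ℂ with Re s < 0, let α > 0 and d > 0. Then ∫_0^d cos(αx) x^{-s-1} dx = -(d^{-s}/s) · ∑_{n=0}^∞ ((-s/2)_n / ((1/2)_n · (1 - s/2)_n)) · (-α²d²/4)^n / n!. -/

import Mathlib

/-- Pochhammer symbol `(z)_n = Γ(z+n)/Γ(z)`. -/
noncomputable def poch (z : ℂ) (n : ℕ) : ℂ := Complex.Gamma (z + n) / Complex.Gamma z

open MeasureTheory Set

lemma gamma_ne_zero_of_pos_re {z : ℂ} (hz : 0 < z.re) : Complex.Gamma z ≠ 0 := by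
  apply Complex.Gamma_ne_zero
  intro m h
  rw [h] at hz
  simp only [Complex.neg_re, Complex.natCast_re] at hz
  linarith [Nat.cast_nonneg (α := ℝ) m]

lemma add_nat_ne_zero_of_pos_re {z : ℂ} (hz : 0 < z.re) (k : ℕ) : z + (k : ℂ) ≠ 0 := by
  intro h
  have : (z + (k : ℂ)).re = 0 := by rw [h]; simp
  simp only [Complex.add_re, Complex.natCast_re] at this
  linarith [Nat.cast_nonneg (α := ℝ) k]

lemma poch_eq_prod {z : ℂ} (hz : 0 < z.re) (n : ℕ) :
    poch z n = ∏ k ∈ Finset.range n, (z + (k : ℂ)) := by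
  induction n with
  | zero => simp [poch, div_self (gamma_ne_zero_of_pos_re hz)]
  | succ n ih =>
    rw [Finset.prod_range_succ, ← ih]
    simp only [poch]
    push_cast
    rw [show z + ((n : ℂ) + 1) = (z + (n : ℂ)) + 1 by ring,
      Complex.Gamma_add_one _ (add_nat_ne_zero_of_pos_re hz n)]
    ring

lemma prod_shift (z : ℂ) (n : ℕ) :
    z * ∏ k ∈ Finset.range n, (z + 1 + (k : ℂ)) =
      (z + (n : ℂ)) * ∏ k ∈ Finset.range n, (z + (k : ℂ)) := by
  induction n with
  | zero => simp
  | succ n ih =>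
    rw [Finset.prod_range_succ, Finset.prod_range_succ, ← mul_assoc, ih]
    push_cast
    ring

lemma prod_half (n : ℕ) :
    (∏ k ∈ Finset.range n, ((1 : ℂ) / 2 + (k : ℂ))) * 4 ^ n * (n.factorial : ℂ) =
      ((2 * n).factorial : ℂ) := by
  induction n with
  | zero => simp
  | succ n ih =>
    have h1 : (2 * (n + 1)).factorial = (2 * n + 2) * ((2 * n + 1) * (2 * n).factorial) := by
      rw [show 2 * (n + 1) = (2 * n + 1) + 1 by ring, Nat.factorial_succ, Nat.factorial_succ]
    rw [Finset.prod_range_succ, h1, Nat.factorial_succ]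
    push_cast
    linear_combination (4 * ((1 : ℂ) / 2 + (n : ℂ)) * ((n : ℂ) + 1)) * ih

/-- For `Re s < 0`, `α > 0`, `d > 0`:
`∫_0^d cos(αx) x^{-s-1} dx = -(d^{-s}/s) ₁F₂(-s/2; 1/2, 1-s/2; -α²d²/4)`. -/
theorem integral_cos_eq_oneF2 (s : ℂ) (hs : s.re < 0) (α d : ℝ)
    (hα : 0 < α) (hd : 0 < d) :
    ∫ x in (0 : ℝ)..d, ((Real.cos (α * x) : ℝ) : ℂ) * (x : ℂ) ^ (-s - 1) =
      -((d : ℂ) ^ (-s) / s) *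
        ∑' n : ℕ, poch (-s / 2) n / (poch (1 / 2) n * poch (1 - s / 2) n) *
          (-(α : ℂ) ^ 2 * (d : ℂ) ^ 2 / 4) ^ n / (n.factorial : ℂ) := by
  have hd0 : (0 : ℝ) ≤ d := hd.le
  have hdC : (d : ℂ) ≠ 0 := by exact_mod_cast hd.ne'
  have hs0 : s ≠ 0 := by
    intro h; rw [h] at hs; simp at hs
  have h2ns : ∀ n : ℕ, ((2 * n : ℕ) : ℂ) - s ≠ 0 := by
    intro n h
    have : (((2 * n : ℕ) : ℂ) - s).re = 0 := by rw [h]; simp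
    simp only [Complex.sub_re, Complex.natCast_re] at this
    have : (0 : ℝ) ≤ (2 * n : ℕ) := Nat.cast_nonneg _
    linarith
  have hre : ∀ n : ℕ, (-1 : ℝ) < (((2 * n : ℕ) : ℂ) - s - 1).re := by
    intro n
    simp only [Complex.sub_re, Complex.natCast_re, Complex.one_re]
    have : (0 : ℝ) ≤ (2 * n : ℕ) := Nat.cast_nonneg _
    linarith
  -- the explicit term values
  set c : ℕ → ℂ := fun n =>
    ((-1) ^ n * (α : ℂ) ^ (2 * n) / ((2 * n).factorial : ℂ)) *
      ((d : ℂ) ^ (2 * n) * (d : ℂ) ^ (-s) / (((2 * n : ℕ) : ℂ) - s)) with hc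
  -- series for the integrand
  set F : ℕ → ℝ → ℂ := fun n x =>
    ((-1) ^ n * ((α * x : ℝ) : ℂ) ^ (2 * n) / ((2 * n).factorial : ℂ)) * (x : ℂ) ^ (-s - 1)
    with hF
  set G : ℕ → ℝ → ℂ := fun n x =>
    ((-1) ^ n * (α : ℂ) ^ (2 * n) / ((2 * n).factorial : ℂ)) *
      (x : ℂ) ^ (((2 * n : ℕ) : ℂ) - s - 1) with hG
  have hFG : ∀ n : ℕ, EqOn (F n) (G n) (Ioc (0 : ℝ) d) := by
    intro n x hx
    have hx0 : (x : ℂ) ≠ 0 := by exact_mod_cast hx.1.ne'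
    simp only [hF, hG]
    rw [show ((2 * n : ℕ) : ℂ) - s - 1 = ((2 * n : ℕ) : ℂ) + (-s - 1) by ring,
      Complex.cpow_add _ _ hx0, Complex.cpow_natCast]
    push_cast
    ring
  have hGint : ∀ n : ℕ, IntegrableOn (G n) (Ioc (0 : ℝ) d) := by
    intro n
    exact (intervalIntegrable_iff_integrableOn_Ioc_of_le hd0).mp
      ((intervalIntegral.intervalIntegrable_cpow' (hre n)).const_mul _)
  have hFint : ∀ n : ℕ, IntegrableOn (F n) (Ioc (0 : ℝ) d) := fun n =>
    (hGint n).congr_fun (fun x hx => ((hFG n) hx).symm) measurableSet_Ioc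
  have hKint : IntegrableOn (fun x : ℝ => x ^ (-s.re - 1)) (Ioc (0 : ℝ) d) :=
    (intervalIntegrable_iff_integrableOn_Ioc_of_le hd0).mp
      (intervalIntegral.intervalIntegrable_rpow' (by linarith))
  set K : ℝ := ∫ x in Ioc (0 : ℝ) d, x ^ (-s.re - 1) with hK
  have hnormbound : ∀ n : ℕ,
      (∫ x in Ioc (0 : ℝ) d, ‖F n x‖) ≤ ((α * d) ^ (2 * n) / ((2 * n).factorial : ℝ)) * K := by
    intro n
    rw [hK, ← integral_const_mul]
    apply setIntegral_mono_on (hFint n).norm (hKint.const_mul _) measurableSet_Ioc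
    intro x hx
    have hx0 : 0 < x := hx.1
    simp only [hF, norm_mul, norm_div, norm_pow, norm_neg, norm_one, one_pow,
      Complex.norm_real, Complex.norm_natCast, one_mul]
    rw [Complex.norm_cpow_eq_rpow_re_of_pos hx0]
    have h1 : (-s - 1).re = -s.re - 1 := by simp
    rw [h1]
    rw [Real.norm_eq_abs, Real.norm_eq_abs, abs_of_pos hα, abs_of_pos hx0]
    gcongr
    exact hx.2
  have hsum : Summable (fun n : ℕ => ∫ x in Ioc (0 : ℝ) d, ‖F n x‖) := by
    apply Summable.of_nonneg_of_le
      (fun n => integral_nonneg fun x => norm_nonneg _) hnormbound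
    apply Summable.mul_right
    have h := (Real.summable_pow_div_factorial (α * d)).comp_injective
      (mul_right_injective₀ (two_ne_zero (α := ℕ)))
    exact h
  have hHasSum : HasSum (fun n : ℕ => ∫ x in Ioc (0 : ℝ) d, F n x)
      (∫ x in Ioc (0 : ℝ) d, ∑' n, F n x) :=
    hasSum_integral_of_summable_integral_norm hFint hsum
  have hint_eq : ∀ n : ℕ, (∫ x in Ioc (0 : ℝ) d, F n x) = c n := by
    intro n
    rw [setIntegral_congr_fun measurableSet_Ioc (hFG n),
      ← intervalIntegral.integral_of_le hd0]
    simp only [hG]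
    rw [intervalIntegral.integral_const_mul, integral_cpow (Or.inl (hre n))]
    rw [show ((2 * n : ℕ) : ℂ) - s - 1 + 1 = ((2 * n : ℕ) : ℂ) - s by ring]
    rw [Complex.ofReal_zero, Complex.zero_cpow (h2ns n), sub_zero]
    rw [show ((2 * n : ℕ) : ℂ) - s = ((2 * n : ℕ) : ℂ) + (-s) by ring,
      Complex.cpow_add _ _ hdC, Complex.cpow_natCast]
    simp only [hc]
    rw [show ((2 * n : ℕ) : ℂ) + -s = ((2 * n : ℕ) : ℂ) - s by ring]
  have hcos_eq : EqOn (fun x : ℝ => ((Real.cos (α * x) : ℝ) : ℂ) * (x : ℂ) ^ (-s - 1))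
      (fun x => ∑' n, F n x) (Ioc (0 : ℝ) d) := by
    intro x _
    simp only [hF]
    rw [Complex.ofReal_cos, Complex.cos_eq_tsum, ← tsum_mul_right]
  have hLHS : (∫ x in (0 : ℝ)..d, ((Real.cos (α * x) : ℝ) : ℂ) * (x : ℂ) ^ (-s - 1))
      = ∑' n, c n := by
    rw [intervalIntegral.integral_of_le hd0,
      setIntegral_congr_fun measurableSet_Ioc hcos_eq, ← hHasSum.tsum_eq]
    exact tsum_congr hint_eq
  -- algebraic identity for the terms
  have hres2 : 0 < (-s / 2).re := by
    have : (-s / 2).re = -s.re / 2 := by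
      simp [Complex.div_re, Complex.normSq]
    rw [this]; linarith
  have hres3 : (0 : ℝ) < ((1 : ℂ) / 2).re := by norm_num
  have hres4 : 0 < (1 - s / 2).re := by
    have : (1 - s / 2).re = 1 - s.re / 2 := by
      simp [Complex.sub_re, Complex.div_re, Complex.normSq]
    rw [this]; linarith
  have key2 : ∀ n : ℕ,
      -((d : ℂ) ^ (-s) / s) * (poch (-s / 2) n / (poch (1 / 2) n * poch (1 - s / 2) n) *
          (-(α : ℂ) ^ 2 * (d : ℂ) ^ 2 / 4) ^ n / (n.factorial : ℂ)) = c n := by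
    intro n
    rw [poch_eq_prod hres2, poch_eq_prod hres3, poch_eq_prod hres4]
    set A := ∏ k ∈ Finset.range n, (-s / 2 + (k : ℂ)) with hA
    set B := ∏ k ∈ Finset.range n, ((1 : ℂ) / 2 + (k : ℂ)) with hB
    set C := ∏ k ∈ Finset.range n, (1 - s / 2 + (k : ℂ)) with hCdef
    have hCC : C = ∏ k ∈ Finset.range n, (-s / 2 + 1 + (k : ℂ)) := by
      rw [hCdef]; exact Finset.prod_congr rfl fun k _ => by ring
    have tele : (-s / 2) * C = (-s / 2 + (n : ℂ)) * A := by
      rw [hCC, hA]; exact prod_shift (-s / 2) n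
    have half : B * 4 ^ n * (n.factorial : ℂ) = ((2 * n).factorial : ℂ) := prod_half n
    have hAne : A ≠ 0 := Finset.prod_ne_zero_iff.mpr fun k _ =>
      add_nat_ne_zero_of_pos_re hres2 k
    have hBne : B ≠ 0 := Finset.prod_ne_zero_iff.mpr fun k _ =>
      add_nat_ne_zero_of_pos_re hres3 k
    have hCne : C ≠ 0 := Finset.prod_ne_zero_iff.mpr fun k _ =>
      add_nat_ne_zero_of_pos_re hres4 k
    have hnfac : (n.factorial : ℂ) ≠ 0 := by exact_mod_cast n.factorial_ne_zero
    have h2nfac : ((2 * n).factorial : ℂ) ≠ 0 := by exact_mod_cast (2 * n).factorial_ne_zero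
    have h4n : (4 : ℂ) ^ n ≠ 0 := by norm_num
    have hpow : (-(α : ℂ) ^ 2 * (d : ℂ) ^ 2 / 4) ^ n =
        (-1) ^ n * (α : ℂ) ^ (2 * n) * (d : ℂ) ^ (2 * n) / 4 ^ n := by
      rw [show (-(α : ℂ) ^ 2 * (d : ℂ) ^ 2 / 4) = (-1) * (α : ℂ) ^ 2 * (d : ℂ) ^ 2 / 4 by ring,
        div_pow, mul_pow, mul_pow, ← pow_mul, ← pow_mul]
    rw [hpow]
    simp only [hc]
    have hden : ((2 * n : ℕ) : ℂ) - s ≠ 0 := h2ns n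
    have hcast : ((2 * n : ℕ) : ℂ) = 2 * (n : ℂ) := by push_cast; ring
    rw [hcast] at hden ⊢
    have hden1 : s * (B * C) * 4 ^ n * (n.factorial : ℂ) ≠ 0 :=
      mul_ne_zero (mul_ne_zero (mul_ne_zero hs0 (mul_ne_zero hBne hCne)) h4n) hnfac
    have hden2 : ((2 * n).factorial : ℂ) * (2 * (n : ℂ) - s) ≠ 0 := mul_ne_zero h2nfac hden
    have e1 : -((d : ℂ) ^ (-s) / s) * (A / (B * C) *
          ((-1) ^ n * (α : ℂ) ^ (2 * n) * (d : ℂ) ^ (2 * n) / 4 ^ n) / (n.factorial : ℂ)) =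
        -((d : ℂ) ^ (-s) * A * ((-1) ^ n * (α : ℂ) ^ (2 * n) * (d : ℂ) ^ (2 * n))) /
          (s * (B * C) * 4 ^ n * (n.factorial : ℂ)) := by
      simp only [div_eq_mul_inv, mul_inv]
      ring
    have e2 : (-1) ^ n * (α : ℂ) ^ (2 * n) / (((2 * n).factorial : ℕ) : ℂ) *
          ((d : ℂ) ^ (2 * n) * (d : ℂ) ^ (-s) / (2 * (n : ℂ) - s)) =
        ((-1) ^ n * (α : ℂ) ^ (2 * n) * ((d : ℂ) ^ (2 * n) * (d : ℂ) ^ (-s))) /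
          (((2 * n).factorial : ℂ) * (2 * (n : ℂ) - s)) := by
      rw [div_mul_div_comm]
    rw [e1, e2, div_eq_div_iff hden1 hden2]
    linear_combination (2 * ((-1) ^ n * (α : ℂ) ^ (2 * n) * (d : ℂ) ^ (2 * n) * (d : ℂ) ^ (-s)) *
          (((2 * n).factorial : ℂ))) * tele +
      (-((-1) ^ n * (α : ℂ) ^ (2 * n) * (d : ℂ) ^ (2 * n) * (d : ℂ) ^ (-s) * s * C)) * half
  rw [hLHS, ← tsum_mul_left]
  exact tsum_congr fun n => (key2 n).symm
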